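/- For every positive integer N and every real number δ with N·|δ| ≤ 1/2, the averaged geometric sum satisfies |(1/N)·Σ_{k=0}^{N−1} e^{2πi·δ·k}|² ≥ 4/π²; that is, in quantum phase estimation with 2^n θ = a + 2^n δ where a is the nearest integer to 2^n θ, the probability amplitude of the outcome a has squared modulus at least 4/π². -/

import Mathlib

open Finset

lemma abs_exp_mul_I_sub_one' (θ : ℝ) :
    ‖Complex.exp (θ * Complex.I) - 1‖ = 2 * |Real.sin (θ / 2)| := by
  have h1 : Complex.exp (θ * Complex.I) - 1 =
      Complex.ofReal (Real.cos θ - 1) + Complex.ofReal (Real.sin θ) * Complex.I := by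
    rw [Complex.exp_mul_I, ← Complex.ofReal_cos, ← Complex.ofReal_sin]
    push_cast
    ring
  rw [h1, Complex.norm_def, Complex.normSq_add_mul_I]
  have h2 : (Real.cos θ - 1) ^ 2 + Real.sin θ ^ 2 = (2 * |Real.sin (θ / 2)|) ^ 2 := by
    have hc : Real.cos θ = Real.cos (θ / 2) ^ 2 - Real.sin (θ / 2) ^ 2 := by
      rw [← Real.cos_two_mul']; ring_nf
    have hs : Real.sin (θ / 2) ^ 2 + Real.cos (θ / 2) ^ 2 = 1 := Real.sin_sq_add_cos_sq _
    have hsq : |Real.sin (θ / 2)| ^ 2 = Real.sin (θ / 2) ^ 2 := sq_abs _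
    have hpyt : Real.sin θ ^ 2 = 1 - Real.cos θ ^ 2 := by
      have := Real.sin_sq_add_cos_sq θ; linarith
    nlinarith [hsq, hpyt, hc, hs]
  rw [h2, Real.sqrt_sq (by positivity)]

/-- In quantum phase estimation, the probability amplitude of the nearest-integer
outcome has squared modulus at least `4/π²`: for `N·|δ| ≤ 1/2`,
`|(1/N)·Σ_{k<N} e^{2πiδk}|² ≥ 4/π²`. -/
theorem qpe_success_probability (N : ℕ) (hN : 0 < N) (δ : ℝ)
    (h : (N : ℝ) * |δ| ≤ 1 / 2) :
    4 / Real.pi ^ 2 ≤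
      ‖(1 / N : ℂ) *
        ∑ k ∈ Finset.range N, Complex.exp (2 * Real.pi * δ * k * Complex.I)‖ ^ 2 := by
  have pi_pos := Real.pi_pos
  have hNR : (0 : ℝ) < N := Nat.cast_pos.mpr hN
  by_cases hδ : δ = 0
  · subst hδ
    simp only [Complex.ofReal_zero, mul_zero, zero_mul, Complex.exp_zero, sum_const,
      card_range, nsmul_eq_mul, mul_one]
    have : (1 / N : ℂ) * N = 1 := by
      rw [one_div, inv_mul_cancel₀ (Nat.cast_ne_zero.mpr hN.ne')]
    rw [this]
    simp only [norm_one, one_pow]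
    rw [div_le_one (by positivity)]
    nlinarith [Real.pi_gt_three]
  · -- δ ≠ 0 case: geometric sum
    have habs : 0 < |δ| := abs_pos.mpr hδ
    set z : ℂ := Complex.exp ((2 * Real.pi * δ : ℝ) * Complex.I) with hz
    have hterm : ∀ k : ℕ, Complex.exp (2 * Real.pi * δ * k * Complex.I) = z ^ k := by
      intro k
      rw [hz, ← Complex.exp_nat_mul]
      congr 1
      push_cast
      ring
    have hδlt : |δ| < 1 := by
      have : (1 : ℝ) ≤ N := Nat.one_le_cast.mpr hN
      nlinarith
    have hz1 : z ≠ 1 := by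
      rw [hz, Ne, Complex.exp_eq_one_iff]
      rintro ⟨n, hn⟩
      have hI : Complex.I ≠ 0 := Complex.I_ne_zero
      have h' : ((2 * Real.pi * δ : ℝ) : ℂ) * Complex.I = ((n : ℂ) * (2 * Real.pi)) * Complex.I := by
        push_cast at hn ⊢
        linear_combination hn
      have hC := mul_right_cancel₀ hI h'
      have hreal : 2 * Real.pi * δ = (n : ℝ) * (2 * Real.pi) := by exact_mod_cast hC
      have h2π : (2 * Real.pi : ℝ) ≠ 0 := by positivity
      have hδn : δ = (n : ℝ) := by
        apply mul_left_cancel₀ h2π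
        linear_combination hreal
      have hn0 : n ≠ 0 := by
        intro h0
        exact hδ (by simp [hδn, h0])
      have h1n : (1 : ℝ) ≤ |(n : ℝ)| := by
        exact_mod_cast Int.one_le_abs hn0
      rw [hδn] at hδlt
      linarith
    have hsum : ∑ k ∈ Finset.range N, Complex.exp (2 * Real.pi * δ * k * Complex.I)
        = (z ^ N - 1) / (z - 1) := by
      rw [Finset.sum_congr rfl (fun k _ => hterm k)]
      exact geom_sum_eq hz1 N
    have hzN : z ^ N = Complex.exp ((2 * Real.pi * δ * N : ℝ) * Complex.I) := by
      rw [hz, ← Complex.exp_nat_mul]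
      congr 1
      push_cast
      ring
    have habs_num : ‖z ^ N - 1‖ = 2 * |Real.sin (Real.pi * δ * N)| := by
      rw [hzN]
      have := abs_exp_mul_I_sub_one' (2 * Real.pi * δ * N)
      rw [show (2 * Real.pi * δ * N) / 2 = Real.pi * δ * N by ring] at this
      exact_mod_cast this
    have habs_den : ‖z - 1‖ = 2 * |Real.sin (Real.pi * δ)| := by
      rw [hz]
      have := abs_exp_mul_I_sub_one' (2 * Real.pi * δ)
      rw [show (2 * Real.pi * δ) / 2 = Real.pi * δ by ring] at this
      exact_mod_cast this
    -- sin bounds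
    have hNd : (N : ℝ) * |δ| ≤ 1 / 2 := h
    have harg : Real.pi * |δ| * N ≤ Real.pi / 2 := by
      have : Real.pi * ((N : ℝ) * |δ|) ≤ Real.pi * (1 / 2) :=
        mul_le_mul_of_nonneg_left hNd (le_of_lt pi_pos)
      nlinarith
    have hsin_num : 2 * ((N : ℝ) * |δ|) ≤ |Real.sin (Real.pi * δ * N)| := by
      have h1 : |Real.sin (Real.pi * δ * N)| = |Real.sin (Real.pi * |δ| * N)| := by
        rcases abs_cases δ with ⟨he, _⟩ | ⟨he, _⟩
        · rw [he]
        · rw [he]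
          rw [show Real.pi * -δ * N = -(Real.pi * δ * N) by ring, Real.sin_neg, abs_neg]
      rw [h1]
      have hx0 : (0 : ℝ) ≤ Real.pi * |δ| * N := by positivity
      have := Real.mul_le_sin hx0 harg
      calc 2 * ((N : ℝ) * |δ|) = 2 / Real.pi * (Real.pi * |δ| * N) := by
            field_simp
        _ ≤ Real.sin (Real.pi * |δ| * N) := this
        _ ≤ |Real.sin (Real.pi * |δ| * N)| := le_abs_self _
    have hsin_den : |Real.sin (Real.pi * δ)| ≤ Real.pi * |δ| := by
      calc |Real.sin (Real.pi * δ)| ≤ |Real.pi * δ| := Real.abs_sin_le_abs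
        _ = Real.pi * |δ| := by rw [abs_mul, abs_of_pos pi_pos]
    have hden_pos : 0 < |Real.sin (Real.pi * δ)| := by
      have := norm_pos_iff.mpr (sub_ne_zero.mpr hz1)
      rw [habs_den] at this
      linarith
    -- put it together
    rw [hsum, norm_mul, norm_div, norm_div, habs_num, habs_den, norm_one, Complex.norm_natCast]
    have hratio : 2 / Real.pi ≤ 1 / N * (2 * |Real.sin (Real.pi * δ * N)| /
        (2 * |Real.sin (Real.pi * δ)|)) := by
      have h1 : 2 * N * |δ| / (Real.pi * |δ|) ≤
          |Real.sin (Real.pi * δ * N)| / |Real.sin (Real.pi * δ)| :=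
        div_le_div₀ (abs_nonneg _) (by linarith) hden_pos hsin_den
      have h2 : 2 * (N : ℝ) * |δ| / (Real.pi * |δ|) = 2 * N / Real.pi := by
        rw [mul_comm Real.pi |δ|, ← div_div, mul_comm 2 (N:ℝ), mul_div_assoc,
          div_self habs.ne', mul_one, mul_comm (N:ℝ) 2]
      rw [h2] at h1
      calc 2 / Real.pi = 1 / N * (2 * N / Real.pi) := by
            field_simp
        _ ≤ 1 / N * (|Real.sin (Real.pi * δ * N)| / |Real.sin (Real.pi * δ)|) :=
            mul_le_mul_of_nonneg_left h1 (by positivity)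
        _ = 1 / N * (2 * |Real.sin (Real.pi * δ * N)| / (2 * |Real.sin (Real.pi * δ)|)) := by
            rw [mul_div_mul_left _ _ (two_ne_zero)]
    have h2pi : (0 : ℝ) ≤ 2 / Real.pi := by positivity
    calc 4 / Real.pi ^ 2 = (2 / Real.pi) ^ 2 := by rw [div_pow]; norm_num
      _ ≤ (1 / N * (2 * |Real.sin (Real.pi * δ * N)| / (2 * |Real.sin (Real.pi * δ)|))) ^ 2 :=
          pow_le_pow_left₀ h2pi hratio 2
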